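/- arXiv:0809.2111 — 3 statements merged into one kernel-verified Lean document; each statement's English description precedes it below -/
import Mathlib

section
/- The function v : ℝ → ℝ given by v(x) = (x/2)·(2Λ(θ_x) + Λ(θ_x + π/x) + Λ(θ_x − π/x) − Λ(2θ_x − π/2)) is strictly increasing on the interval [5, ∞). (In particular the sequence n ↦ v(n), which by Vesnin's formula equals the hyperbolic volume of the n-th Löbell polyhedron L(n), is strictly increasing for integers n ≥ 5.) -/
/-- The Lobachevsky function `Λ(z) = -∫₀^z log |2 sin t| dt`. -/
noncomputable def lob (z : ℝ) : ℝ := -∫ t in (0:ℝ)..z, Real.log |2 * Real.sin t|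

/-- `θ_x = π/2 - arccos (1 / (2 cos (π/x)))`. -/
noncomputable def theta (x : ℝ) : ℝ :=
  Real.pi / 2 - Real.arccos (1 / (2 * Real.cos (Real.pi / x)))

/-- `g(x) = 2Λ(θ_x) + Λ(θ_x + π/x) + Λ(θ_x − π/x) − Λ(2θ_x − π/2)`. -/
noncomputable def lobG (x : ℝ) : ℝ :=
  2 * lob (theta x) + lob (theta x + Real.pi / x) + lob (theta x - Real.pi / x)
    - lob (2 * theta x - Real.pi / 2)

/-- `v(x) = (x/2) · g(x)`, the volume of the Löbell polyhedron `L(x)` for integer `x ≥ 5`. -/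
noncomputable def lobV (x : ℝ) : ℝ := x / 2 * lobG x

open Real MeasureTheory intervalIntegral Set

noncomputable def L (t : ℝ) : ℝ := Real.log |2 * Real.sin t|

lemma L_measurable : Measurable L :=
  Real.measurable_log.comp ((measurable_const.mul Real.measurable_sin).abs)

lemma L_even (t : ℝ) : L (-t) = L t := by
  simp [L, Real.sin_neg, abs_neg, mul_neg]

lemma II_log_zero_one : IntervalIntegrable Real.log volume 0 1 := by
  have h : IntegrableOn (fun t : ℝ => -Real.log t) (Ioc (0:ℝ) 1) := by
    apply intervalIntegral.integrableOn_deriv_of_nonneg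
      (g := fun t => t - t * Real.log t)
    · exact (continuous_id.sub Real.continuous_mul_log).continuousOn
    · intro t ht
      have := (Real.hasDerivAt_mul_log (ne_of_gt ht.1))
      simpa using (hasDerivAt_id' t).fun_sub this
    · intro t ht
      have : Real.log t ≤ 0 := Real.log_nonpos ht.1.le ht.2.le
      linarith
  have h2 : IntegrableOn Real.log (Ioc (0:ℝ) 1) := by
    rw [IntegrableOn, show (Real.log : ℝ → ℝ) = fun t => -(-Real.log t) from funext fun t => by ring]
    exact h.neg
  rw [intervalIntegrable_iff_integrableOn_Ioc_of_le zero_le_one]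
  exact h2

lemma II_log_zero_pi_div_two : IntervalIntegrable Real.log volume 0 (π/2) := by
  refine II_log_zero_one.trans (intervalIntegrable_log ?_)
  intro h
  rcases h with h
  rw [Set.mem_uIcc] at h
  have := pi_gt_three
  rcases h with ⟨h1, _⟩ | ⟨_, h2⟩ <;> linarith

lemma II_L_zero : IntervalIntegrable L volume 0 (π/2) := by
  rw [intervalIntegrable_iff_integrableOn_Ioc_of_le (by positivity)]
  have hmeas : AEStronglyMeasurable L (volume.restrict (Ioc 0 (π/2))) :=
    L_measurable.aestronglyMeasurable
  have hbound : IntegrableOn (fun t => |Real.log t| + 2) (Ioc (0:ℝ) (π/2)) := by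
    apply Integrable.add _ (integrable_const 2)
    have := II_log_zero_pi_div_two
    rw [intervalIntegrable_iff_integrableOn_Ioc_of_le (by positivity)] at this
    exact this.abs
  refine Integrable.mono' hbound hmeas ?_
  filter_upwards [ae_restrict_mem measurableSet_Ioc] with t ht
  have h0 : 0 < t := ht.1
  have h2 : t ≤ π/2 := ht.2
  have hsin₀ : 0 < Real.sin t := Real.sin_pos_of_pos_of_lt_pi h0 (lt_of_le_of_lt h2 (by linarith [pi_pos]))
  have hsin₁ : Real.sin t ≤ t := Real.sin_le h0.le
  have hsin₂ : 2 / π * t ≤ Real.sin t := by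
    have := Real.mul_le_sin (x := t) h0.le h2
    linarith [this]
  rw [L, abs_of_pos (by positivity : (0:ℝ) < 2 * Real.sin t)]
  rw [Real.norm_eq_abs, abs_le]
  constructor
  · have : Real.log (2/π*t) ≤ Real.log (2 * Real.sin t) :=
      Real.log_le_log (by positivity) (by linarith)
    have h4 : Real.log (2/π*t) = Real.log (2/π) + Real.log t := Real.log_mul (by positivity) h0.ne'
    have h5 : (0:ℝ) < 2/π := by positivity
    have h6 : Real.log (2/π) ≥ Real.log (1/2) := by
      apply Real.log_le_log (by norm_num)
      rw [div_le_div_iff₀ (by norm_num) pi_pos]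
      linarith [pi_lt_d2]
    have h7 : Real.log (1/2) ≥ -1 := by
      rw [show (1:ℝ)/2 = 2⁻¹ by norm_num, Real.log_inv]
      have := Real.log_le_sub_one_of_pos (by norm_num : (0:ℝ) < 2)
      linarith
    have h8 : Real.log t ≥ -|Real.log t| := neg_abs_le _
    linarith
  · have : Real.log (2 * Real.sin t) ≤ Real.log (2 * t) :=
      Real.log_le_log (by positivity) (by linarith)
    have h4 : Real.log (2*t) = Real.log 2 + Real.log t := Real.log_mul (by norm_num) h0.ne'
    have h5 : Real.log 2 ≤ 1 := by
      have := Real.log_le_sub_one_of_pos (by norm_num : (0:ℝ) < 2); linarith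
    have h8 : Real.log t ≤ |Real.log t| := le_abs_self _
    linarith

lemma II_L_full : IntervalIntegrable L volume (-(π/2)) (π/2) := by
  have hneg : IntervalIntegrable L volume (-(π/2)) 0 := by
    have := (IntervalIntegrable.iff_comp_neg (by simp)).mp II_L_zero
    simp only [L_even, neg_zero] at this
    exact (this.symm)
  exact hneg.trans II_L_zero

lemma II_L {a b : ℝ} (ha : a ∈ Icc (-(π/2)) (π/2)) (hb : b ∈ Icc (-(π/2)) (π/2)) :
    IntervalIntegrable L volume a b := by
  apply II_L_full.mono_set
  rw [Set.uIcc_subset_uIcc_iff_mem]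
  constructor
  · rw [Set.uIcc_of_le (by linarith [pi_pos])]; exact ha
  · rw [Set.uIcc_of_le (by linarith [pi_pos])]; exact hb

lemma lob_eq (z : ℝ) : lob z = -∫ t in (0:ℝ)..z, L t := rfl

lemma lob_zero : lob 0 = 0 := by simp [lob]

lemma lob_odd (z : ℝ) : lob (-z) = -lob z := by
  rw [lob_eq, lob_eq, neg_inj]
  have : (∫ t in (0:ℝ)..z, L t) = ∫ t in (0:ℝ)..z, L (-t) := by
    simp [L_even]
  rw [this, intervalIntegral.integral_comp_neg]
  rw [neg_zero, intervalIntegral.integral_symm]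

lemma hasDerivAt_lob {z : ℝ} (hz : z ∈ Ioo (-(π/2)) (π/2)) (hsin : Real.sin z ≠ 0) :
    HasDerivAt lob (-L z) z := by
  have hint : IntervalIntegrable L volume 0 z :=
    II_L (by constructor <;> [linarith [pi_pos]; linarith [pi_pos]]) ⟨hz.1.le, hz.2.le⟩
  have hmeas : StronglyMeasurableAtFilter L (nhds z) :=
    ⟨Set.univ, Filter.univ_mem, (L_measurable.aestronglyMeasurable).restrict⟩
  have hcont : ContinuousAt L z := by
    apply Real.continuousAt_log ?_ |>.comp
    · exact ((continuous_const.mul Real.continuous_sin).abs).continuousAt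
    · simpa [abs_eq_zero] using hsin
  have heq : lob = fun x => -∫ t in (0:ℝ)..x, L t := rfl
  rw [heq]
  exact (intervalIntegral.integral_hasDerivAt_right hint hmeas hcont).neg

lemma continuousOn_lob : ContinuousOn lob (Icc (-(π/2)) (π/2)) := by
  have heq : lob = fun x => -∫ t in (0:ℝ)..x, L t := rfl
  rw [heq]
  have h := (intervalIntegral.continuousOn_primitive_interval'
    (μ := volume) (f := L) II_L_full (a := 0) (by
      rw [Set.uIcc_of_le (by linarith [pi_pos])]
      constructor <;> [linarith [pi_pos]; linarith [pi_pos]])).neg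
  rwa [Set.uIcc_of_le (by linarith [pi_pos])] at h

lemma pi_div_four_mem : π/4 ∈ Icc (-(π/2)) (π/2) := by
  constructor <;> linarith [pi_pos]

lemma zero_mem_pi : (0:ℝ) ∈ Icc (-(π/2)) (π/2) := by
  constructor <;> linarith [pi_pos]

lemma integral_L_zero : (∫ t in (0:ℝ)..(π/2), L t) = 0 := by
  set I := ∫ t in (0:ℝ)..(π/2), L t with hI
  have hA : (∫ u in (0:ℝ)..(π/4), L (2*u)) = I/2 := by
    rw [intervalIntegral.integral_comp_mul_left (c := 2) L (by norm_num)]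
    norm_num
    rw [show (2:ℝ) * (π/4) = π/2 by ring]
    rw [hI]; ring
  have hB : (∫ u in (0:ℝ)..(π/4), L (2*u))
      = ∫ u in (0:ℝ)..(π/4), (L u + Real.log |2 * Real.cos u|) := by
    apply intervalIntegral.integral_congr_ae
    apply Filter.Eventually.of_forall
    intro u hu
    rw [Set.uIoc_of_le (by positivity : (0:ℝ) ≤ π/4)] at hu
    have h0 : 0 < u := hu.1
    have h1 : u ≤ π/4 := hu.2
    have hs : 0 < Real.sin u := Real.sin_pos_of_pos_of_lt_pi h0 (by linarith [pi_pos])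
    have hc : 0 < Real.cos u := Real.cos_pos_of_mem_Ioo ⟨by linarith [pi_pos], by linarith [pi_pos]⟩
    have h2 : 2 * Real.sin (2*u) = (2 * Real.sin u) * (2 * Real.cos u) := by
      rw [Real.sin_two_mul]; ring
    rw [L, L, h2, abs_mul]
    rw [Real.log_mul (by positivity) (by positivity)]
  have hIntL : IntervalIntegrable L volume 0 (π/4) := II_L zero_mem_pi pi_div_four_mem
  have hIntC : IntervalIntegrable (fun u => Real.log |2 * Real.cos u|) volume 0 (π/4) := by
    apply ContinuousOn.intervalIntegrable
    apply ContinuousOn.log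
    · exact ((continuous_const.mul Real.continuous_cos).abs).continuousOn
    · intro u hu
      rw [Set.uIcc_of_le (by positivity : (0:ℝ) ≤ π/4)] at hu
      have hc : 0 < Real.cos u := Real.cos_pos_of_mem_Ioo
        ⟨by linarith [pi_pos, hu.1], by linarith [pi_pos, hu.2]⟩
      positivity
  have hC : (∫ u in (0:ℝ)..(π/4), (L u + Real.log |2 * Real.cos u|))
      = (∫ u in (0:ℝ)..(π/4), L u) + ∫ u in (0:ℝ)..(π/4), Real.log |2 * Real.cos u| :=
    intervalIntegral.integral_add hIntL hIntC
  have hD : (∫ u in (0:ℝ)..(π/4), Real.log |2 * Real.cos u|)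
      = ∫ u in (π/4)..(π/2), L u := by
    have : ∀ u : ℝ, Real.log |2 * Real.cos u| = L (π/2 - u) := by
      intro u; rw [L, Real.sin_pi_div_two_sub]
    simp only [this]
    rw [intervalIntegral.integral_comp_sub_left (f := L) (d := π/2)]
    norm_num
    rw [show π/2 - π/4 = π/4 by ring]
  have hE : (∫ u in (0:ℝ)..(π/4), L u) + (∫ u in (π/4)..(π/2), L u) = I := by
    rw [hI]
    exact intervalIntegral.integral_add_adjacent_intervals hIntL
      (II_L pi_div_four_mem ⟨by linarith [pi_pos], le_refl _⟩)
  have : I/2 = I := by rw [← hA, hB, hC, hD]; exact hE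
  linarith

lemma lob_pi_div_two : lob (π/2) = 0 := by
  rw [lob_eq, integral_L_zero, neg_zero]

lemma lob_pos {z : ℝ} (h0 : 0 < z) (h1 : z < π/2) : 0 < lob z := by
  have hpi := pi_pos
  have hm : StrictMonoOn lob (Icc 0 (π/6)) := by
    apply strictMonoOn_of_deriv_pos (convex_Icc _ _)
    · exact continuousOn_lob.mono (fun t ht => ⟨by linarith [ht.1], by linarith [ht.2]⟩)
    · intro t ht
      rw [interior_Icc] at ht
      obtain ⟨ht1, ht2⟩ := ht
      have hsin : 0 < Real.sin t := Real.sin_pos_of_pos_of_lt_pi ht1 (by linarith)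
      have hd := hasDerivAt_lob (z := t) ⟨by linarith, by linarith⟩ hsin.ne'
      rw [hd.deriv]
      have hlt : Real.sin t < 1/2 := by
        have := Real.sin_lt_sin_of_lt_of_le_pi_div_two (x := t) (y := π/6)
          (by linarith) (by linarith) ht2
        rwa [Real.sin_pi_div_six] at this
      have : |2 * Real.sin t| < 1 := by
        rw [abs_of_pos (by positivity)]; linarith
      have := Real.log_neg (by positivity) this
      rw [L]; linarith
  have ha : StrictAntiOn lob (Icc (π/6) (π/2)) := by
    apply strictAntiOn_of_deriv_neg (convex_Icc _ _)
    · exact continuousOn_lob.mono (fun t ht => ⟨by linarith [ht.1], ht.2⟩)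
    · intro t ht
      rw [interior_Icc] at ht
      obtain ⟨ht1, ht2⟩ := ht
      have hsin : 0 < Real.sin t := Real.sin_pos_of_pos_of_lt_pi (by linarith) (by linarith)
      have hd := hasDerivAt_lob (z := t) ⟨by linarith, ht2⟩ hsin.ne'
      rw [hd.deriv]
      have hlt : 1/2 < Real.sin t := by
        have := Real.sin_lt_sin_of_lt_of_le_pi_div_two (x := π/6) (y := t)
          (by linarith) ht2.le ht1
        rwa [Real.sin_pi_div_six] at this
      have : 1 < |2 * Real.sin t| := by
        rw [abs_of_pos (by positivity)]; linarith
      have := Real.log_pos this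
      rw [L]; linarith
  rcases le_or_gt z (π/6) with hz | hz
  · have := hm ⟨le_refl 0, by linarith⟩ ⟨h0.le, hz⟩ h0
    rwa [lob_zero] at this
  · have := ha ⟨hz.le, h1.le⟩ ⟨by linarith, le_refl _⟩ h1
    rwa [lob_pi_div_two] at this

section ThetaFacts

variable {x : ℝ} (hx : 4 < x)
include hx

lemma alpha_mem : π/x ∈ Ioo (0:ℝ) (π/4) := by
  have hpi := pi_pos
  constructor
  · exact div_pos hpi (by linarith)
  · rw [div_lt_div_iff₀ (by linarith) (by norm_num)]
    nlinarith

lemma cos_alpha_mem : Real.cos (π/x) ∈ Ioo (Real.sqrt 2/2) 1 := by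
  obtain ⟨h1, h2⟩ := alpha_mem hx
  have hpi := pi_pos
  constructor
  · rw [← Real.cos_pi_div_four]
    exact Real.cos_lt_cos_of_nonneg_of_le_pi h1.le (by linarith) h2
  · rw [← Real.cos_zero]
    exact Real.cos_lt_cos_of_nonneg_of_le_pi (le_refl 0) (by linarith) h1

omit hx in
lemma sqrt2_facts : (1:ℝ) < Real.sqrt 2 / 2 * 2 ∧ (Real.sqrt 2/2)^2 = 1/2 := by
  have h : Real.sqrt 2 ^ 2 = 2 := Real.sq_sqrt (by norm_num)
  have h2 : 1 < Real.sqrt 2 := by nlinarith [Real.sqrt_nonneg 2]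
  constructor
  · linarith
  · nlinarith

lemma u_mem : 1 / (2 * Real.cos (π/x)) ∈ Ioo (1/2 : ℝ) (Real.sqrt 2/2) := by
  obtain ⟨hc1, hc2⟩ := cos_alpha_mem hx
  obtain ⟨hs1, hs2⟩ := sqrt2_facts
  have hc0 : 0 < Real.cos (π/x) := by nlinarith
  constructor
  · rw [div_lt_div_iff₀ (by norm_num) (by positivity)]
    linarith
  · rw [div_lt_div_iff₀ (by positivity) (by norm_num)]
    nlinarith

lemma sin_theta : Real.sin (theta x) = 1 / (2 * Real.cos (π/x)) := by
  obtain ⟨hu1, hu2⟩ := u_mem hx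
  obtain ⟨hs1, hs2⟩ := sqrt2_facts
  rw [theta, Real.sin_pi_div_two_sub, Real.cos_arccos (by nlinarith [Real.sqrt_nonneg 2]) (by nlinarith [Real.sqrt_nonneg 2])]

lemma theta_mem : theta x ∈ Ioo (π/6) (π/4) := by
  have hpi := pi_pos
  obtain ⟨hu1, hu2⟩ := u_mem hx
  have hst := sin_theta hx
  have hθ : theta x ∈ Ioo (0:ℝ) (π/2) := by
    rw [theta]
    constructor
    · have := Real.arccos_lt_pi_div_two.mpr (by linarith : 0 < 1 / (2 * Real.cos (π/x)))
      linarith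
    · have := Real.arccos_pos.mpr (by
        obtain ⟨hs1, hs2⟩ := sqrt2_facts
        nlinarith [Real.sqrt_nonneg 2] : 1 / (2 * Real.cos (π/x)) < 1)
      linarith
  have hmono := Real.strictMonoOn_sin
  constructor
  · have h6 : (π/6) ∈ Icc (-(π/2)) (π/2) := by constructor <;> linarith
    have hθm : theta x ∈ Icc (-(π/2)) (π/2) := by constructor <;> linarith [hθ.1, hθ.2]
    have : Real.sin (π/6) < Real.sin (theta x) := by
      rw [Real.sin_pi_div_six, hst]; linarith
    exact (hmono.lt_iff_lt h6 hθm).mp this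
  · have h4 : (π/4) ∈ Icc (-(π/2)) (π/2) := by constructor <;> linarith
    have hθm : theta x ∈ Icc (-(π/2)) (π/2) := by constructor <;> linarith [hθ.1, hθ.2]
    have : Real.sin (theta x) < Real.sin (π/4) := by
      rw [Real.sin_pi_div_four, hst]; linarith
    exact (hmono.lt_iff_lt hθm h4).mp this

lemma theta_add_lt : theta x + π/x < π/2 := by
  have hpi := pi_pos
  obtain ⟨ha1, ha2⟩ := alpha_mem hx
  obtain ⟨hc1, hc2⟩ := cos_alpha_mem hx
  obtain ⟨hs1, hs2⟩ := sqrt2_facts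
  have hst := sin_theta hx
  obtain ⟨ht1, ht2⟩ := theta_mem hx
  have hmono := Real.strictMonoOn_sin
  have key : Real.sin (theta x) < Real.sin (π/2 - π/x) := by
    rw [Real.sin_pi_div_two_sub, hst]
    rw [div_lt_iff₀ (by nlinarith)]
    nlinarith
  have := (hmono.lt_iff_lt (by constructor <;> linarith) (by constructor <;> linarith)).mp key
  linarith

lemma theta_sub_pos : 0 < theta x - π/x := by
  have hpi := pi_pos
  obtain ⟨ha1, ha2⟩ := alpha_mem hx
  obtain ⟨hc1, hc2⟩ := cos_alpha_mem hx
  obtain ⟨hs1, hs2⟩ := sqrt2_facts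
  have hst := sin_theta hx
  obtain ⟨ht1, ht2⟩ := theta_mem hx
  have hmono := Real.strictMonoOn_sin
  have hsa : Real.sin (π/x) < Real.sin (theta x) := by
    rw [hst]
    have hsin2 : Real.sin (π/x) * Real.cos (π/x) * 2 < 1 := by
      have h2a : Real.sin (2 * (π/x)) < 1 := by
        have : 2 * (π/x) < π/2 := by linarith
        calc Real.sin (2*(π/x)) < Real.sin (π/2) := by
              apply Real.sin_lt_sin_of_lt_of_le_pi_div_two (by linarith) (le_refl _) this
          _ = 1 := Real.sin_pi_div_two
      rw [Real.sin_two_mul] at h2a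
      linarith
    rw [lt_div_iff₀ (by nlinarith)]
    nlinarith
  have := (hmono.lt_iff_lt (by constructor <;> linarith) (by constructor <;> linarith)).mp hsa
  linarith

end ThetaFacts

section Bracket

variable {x : ℝ} (hx : 4 < x)
include hx

lemma c_facts : 1/2 < Real.cos (π/x)^2 ∧ 0 < Real.cos (π/x) := by
  obtain ⟨hc1, hc2⟩ := cos_alpha_mem hx
  obtain ⟨hs1, hs2⟩ := sqrt2_facts
  constructor
  · nlinarith [Real.sqrt_nonneg 2]
  · nlinarith [Real.sqrt_nonneg 2]

lemma sin_theta_add_pos : 0 < Real.sin (theta x + π/x) :=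
  Real.sin_pos_of_pos_of_lt_pi
    (by have := theta_mem hx; have := alpha_mem hx; have := pi_pos
        linarith [this, (theta_mem hx).1, (alpha_mem hx).1])
    (by linarith [theta_add_lt hx, pi_pos])

lemma sin_theta_sub_pos : 0 < Real.sin (theta x - π/x) :=
  Real.sin_pos_of_pos_of_lt_pi (theta_sub_pos hx)
    (by linarith [(theta_mem hx).2, (alpha_mem hx).1, pi_pos])

lemma prod_id :
    (2 * Real.sin (theta x + π/x)) * (2 * Real.sin (theta x - π/x))
      = (2*Real.cos (π/x)^2 - 1)^2 / Real.cos (π/x)^2 := by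
  set θ := theta x
  set a := π/x
  have h1 : Real.sin θ ^ 2 + Real.cos θ ^ 2 = 1 := Real.sin_sq_add_cos_sq θ
  have h2 : Real.sin a ^ 2 + Real.cos a ^ 2 = 1 := Real.sin_sq_add_cos_sq a
  have hst : Real.sin θ = 1 / (2 * Real.cos a) := sin_theta hx
  have hc0 : 0 < Real.cos a := (c_facts hx).2
  have key : Real.sin (θ+a) * Real.sin (θ-a) = Real.sin θ^2 - Real.sin a^2 := by
    rw [Real.sin_add, Real.sin_sub]
    linear_combination (-(Real.sin a^2)) * h1 + (Real.sin θ^2) * h2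
  calc (2 * Real.sin (θ+a)) * (2 * Real.sin (θ-a))
      = 4*(Real.sin θ^2 - Real.sin a^2) := by linear_combination 4 * key
    _ = (2*Real.cos a^2 - 1)^2 / Real.cos a^2 := by
        rw [hst]
        field_simp
        linear_combination (-16*Real.cos a^2) * h2

lemma sin_two_theta : 2 * Real.sin (2 * theta x - π/2)
    = -((2*Real.cos (π/x)^2 - 1) / Real.cos (π/x)^2) := by
  have hc0 : 0 < Real.cos (π/x) := (c_facts hx).2
  have hst : Real.sin (theta x) = 1 / (2 * Real.cos (π/x)) := sin_theta hx
  rw [Real.sin_sub_pi_div_two, Real.cos_two_mul]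
  have h1 : Real.sin (theta x) ^ 2 + Real.cos (theta x) ^ 2 = 1 :=
    Real.sin_sq_add_cos_sq (theta x)
  have h2 : Real.cos (theta x)^2 = 1 - Real.sin (theta x)^2 := by linarith
  rw [h2, hst]
  field_simp
  ring

lemma bracket_zero :
    2 * L (theta x) + L (theta x + π/x) + L (theta x - π/x)
      - 2 * L (2 * theta x - π/2) = 0 := by
  set c := Real.cos (π/x) with hc
  have hc0 : 0 < c := (c_facts hx).2
  have hd0 : 0 < 2*c^2 - 1 := by have := (c_facts hx).1; linarith
  have hst : Real.sin (theta x) = 1 / (2 * c) := sin_theta hx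
  have hLθ : L (theta x) = -Real.log c := by
    rw [L, hst, show 2 * (1/(2*c)) = c⁻¹ by field_simp, abs_of_pos (by positivity), Real.log_inv]
  have hsp := sin_theta_add_pos hx
  have hsm := sin_theta_sub_pos hx
  have hsum : L (theta x + π/x) + L (theta x - π/x)
      = 2*Real.log (2*c^2-1) - 2*Real.log c := by
    rw [L, L, abs_of_pos (by positivity), abs_of_pos (by positivity),
      ← Real.log_mul (by positivity) (by positivity), prod_id hx, ← hc]
    rw [Real.log_div (by positivity) (by positivity), Real.log_pow, Real.log_pow]
    push_cast
    ring
  have hLq : L (2 * theta x - π/2) = Real.log (2*c^2-1) - 2*Real.log c := by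
    rw [L]
    have h := sin_two_theta hx
    rw [← hc] at h
    rw [h, abs_neg, abs_of_pos (by positivity)]
    rw [Real.log_div (by positivity) (by positivity), Real.log_pow]
    push_cast
    ring
  linarith [hLθ, hsum, hLq]

end Bracket

lemma hasDerivAt_lobV {x : ℝ} (hx : 4 < x) :
    HasDerivAt lobV (lobG x / 2
      + x/2 * (π/x^2) * (L (theta x + π/x) - L (theta x - π/x))) x := by
  have hx0 : (0:ℝ) < x := by linarith
  have hpi := pi_pos
  obtain ⟨hc2, hc0⟩ := c_facts hx
  obtain ⟨ht1, ht2⟩ := theta_mem hx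
  obtain ⟨ha1, ha2⟩ := alpha_mem hx
  -- derivative of y ↦ π / y
  have hA : HasDerivAt (fun y : ℝ => π / y) (-(π / x^2)) x := by
    have h := (hasDerivAt_inv hx0.ne').const_mul π
    simp only [← div_eq_mul_inv] at h
    rw [show -(π / x^2) = π * -(x ^ 2)⁻¹ by ring]
    exact h
  -- derivative of y ↦ 1 / (2 cos (π/y))
  have hcos : HasDerivAt (fun y : ℝ => Real.cos (π / y))
      (-Real.sin (π/x) * -(π / x^2)) x :=
    (Real.hasDerivAt_cos (π/x)).comp x hA
  have h2c : HasDerivAt (fun y : ℝ => 2 * Real.cos (π / y))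
      (2 * (-Real.sin (π/x) * -(π / x^2))) x := hcos.const_mul 2
  have h2cne : 2 * Real.cos (π/x) ≠ 0 := by positivity
  have hu : HasDerivAt (fun y : ℝ => 1 / (2 * Real.cos (π / y)))
      (-(2 * (-Real.sin (π/x) * -(π / x^2))) / (2 * Real.cos (π/x))^2) x := by
    have h := h2c.inv h2cne
    simpa only [one_div, Pi.inv_def] using h
  set U : ℝ := -(2 * (-Real.sin (π/x) * -(π / x^2))) / (2 * Real.cos (π/x))^2 with hU
  set u : ℝ := 1 / (2 * Real.cos (π/x)) with hudef
  have hu1 : u ≠ -1 := by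
    obtain ⟨h1, _⟩ := u_mem hx
    intro h; rw [← hudef] at h1; rw [h] at h1; norm_num at h1
  have hu2 : u ≠ 1 := by
    obtain ⟨_, h2⟩ := u_mem hx
    obtain ⟨hs1, hs2⟩ := sqrt2_facts
    intro h; rw [← hudef] at h2; rw [h] at h2; nlinarith [Real.sqrt_nonneg 2]
  have harc : HasDerivAt (fun y : ℝ => Real.arccos (1 / (2 * Real.cos (π / y))))
      (-(1 / Real.sqrt (1 - u^2)) * U) x :=
    by have h := HasDerivAt.comp (h₂ := Real.arccos) (h := fun y : ℝ => 1 / (2 * Real.cos (π / y))) x (Real.hasDerivAt_arccos hu1 hu2) hu; exact h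
  set T : ℝ := -(-(1 / Real.sqrt (1 - u^2)) * U) with hT
  have htheta : HasDerivAt theta T x := by
    have h : theta = fun y : ℝ => π/2 - Real.arccos (1 / (2 * Real.cos (π / y))) := rfl
    rw [h, hT]
    exact harc.const_sub (π/2)
  -- memberships
  have hθmem : theta x ∈ Ioo (-(π/2)) (π/2) := ⟨by linarith, by linarith⟩
  have hθsin : Real.sin (theta x) ≠ 0 := by
    rw [sin_theta hx]; positivity
  have hpmem : theta x + π/x ∈ Ioo (-(π/2)) (π/2) :=
    ⟨by linarith, by linarith [theta_add_lt hx]⟩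
  have hmmem : theta x - π/x ∈ Ioo (-(π/2)) (π/2) :=
    ⟨by linarith [theta_sub_pos hx], by linarith⟩
  have hqmem : 2 * theta x - π/2 ∈ Ioo (-(π/2)) (π/2) := ⟨by linarith, by linarith⟩
  have hqsin : Real.sin (2 * theta x - π/2) ≠ 0 := by
    have h := sin_two_theta hx
    intro h0
    rw [h0] at h
    have : (2 * Real.cos (π/x)^2 - 1) / Real.cos (π/x)^2 > 0 := by
      apply div_pos (by linarith) (by positivity)
    linarith
  -- assemble
  have h1 : HasDerivAt (fun y => lob (theta y)) (-L (theta x) * T) x :=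
    (hasDerivAt_lob hθmem hθsin).comp x htheta
  have h2 : HasDerivAt (fun y => lob (theta y + π/y))
      (-L (theta x + π/x) * (T + -(π / x^2))) x :=
    by have h := HasDerivAt.comp (h₂ := lob) (h := fun y => theta y + π/y) x (hasDerivAt_lob hpmem (sin_theta_add_pos hx).ne') (htheta.add hA); exact h
  have h3 : HasDerivAt (fun y => lob (theta y - π/y))
      (-L (theta x - π/x) * (T - -(π / x^2))) x :=
    by have h := HasDerivAt.comp (h₂ := lob) (h := fun y => theta y - π/y) x (hasDerivAt_lob hmmem (sin_theta_sub_pos hx).ne') (htheta.sub hA); exact h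
  have h4inner : HasDerivAt (fun y => 2 * theta y - π/2) (2 * T) x :=
    (htheta.const_mul 2).sub_const (π/2)
  have h4 : HasDerivAt (fun y => lob (2 * theta y - π/2))
      (-L (2 * theta x - π/2) * (2 * T)) x :=
    by have h := HasDerivAt.comp (h₂ := lob) (h := fun y => 2 * theta y - π/2) x (hasDerivAt_lob hqmem hqsin) h4inner; exact h
  have hG : HasDerivAt lobG
      (2 * (-L (theta x) * T) + -L (theta x + π/x) * (T + -(π / x^2))
        + -L (theta x - π/x) * (T - -(π / x^2))
        - -L (2 * theta x - π/2) * (2 * T)) x := by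
    have h : lobG = fun y => 2 * lob (theta y) + lob (theta y + π/y)
        + lob (theta y - π/y) - lob (2 * theta y - π/2) := rfl
    rw [h]
    exact (((h1.const_mul 2).add h2).add h3).sub h4
  have hV : HasDerivAt lobV (1/2 * lobG x
      + x/2 * (2 * (-L (theta x) * T) + -L (theta x + π/x) * (T + -(π / x^2))
        + -L (theta x - π/x) * (T - -(π / x^2))
        - -L (2 * theta x - π/2) * (2 * T))) x := by
    have h : lobV = fun y => y/2 * lobG y := rfl
    rw [h]
    have hid : HasDerivAt (fun y : ℝ => y / 2) (1/2) x := by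
      simpa using (hasDerivAt_id x).div_const 2
    exact hid.mul hG
  convert hV using 1
  have hb := bracket_zero hx
  linear_combination (x/2 * T) * hb

lemma lobG_pos {x : ℝ} (hx : 4 < x) : 0 < lobG x := by
  have hpi := pi_pos
  obtain ⟨ht1, ht2⟩ := theta_mem hx
  obtain ⟨ha1, ha2⟩ := alpha_mem hx
  have h1 : 0 < lob (theta x) := lob_pos (by linarith) (by linarith)
  have h2 : 0 < lob (theta x + π/x) :=
    lob_pos (by linarith) (by linarith [theta_add_lt hx])
  have h3 : 0 < lob (theta x - π/x) :=
    lob_pos (theta_sub_pos hx) (by linarith)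
  have h4 : 0 < lob (π/2 - 2*theta x) := lob_pos (by linarith) (by linarith)
  have heq : lob (2 * theta x - π/2) = -lob (π/2 - 2*theta x) := by
    rw [show 2 * theta x - π/2 = -(π/2 - 2*theta x) by ring, lob_odd]
  rw [lobG, heq]
  linarith

lemma L_diff_pos {x : ℝ} (hx : 4 < x) :
    0 < L (theta x + π/x) - L (theta x - π/x) := by
  have hpi := pi_pos
  obtain ⟨ht1, ht2⟩ := theta_mem hx
  obtain ⟨ha1, ha2⟩ := alpha_mem hx
  have hsp := sin_theta_add_pos hx
  have hsm := sin_theta_sub_pos hx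
  have hlt : Real.sin (theta x - π/x) < Real.sin (theta x + π/x) := by
    apply Real.sin_lt_sin_of_lt_of_le_pi_div_two (by linarith [theta_sub_pos hx])
      (le_of_lt (theta_add_lt hx)) (by linarith)
  rw [L, L, abs_of_pos (by positivity), abs_of_pos (by positivity)]
  have := Real.log_lt_log (by positivity : (0:ℝ) < 2 * Real.sin (theta x - π/x))
    (by linarith : 2 * Real.sin (theta x - π/x) < 2 * Real.sin (theta x + π/x))
  linarith

/-- The Löbell volume function `v` is strictly increasing on `[5, ∞)`. -/
theorem lobV_strictMonoOn : StrictMonoOn lobV (Set.Ici (5 : ℝ)) := by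
  apply strictMonoOn_of_deriv_pos (convex_Ici 5)
  · intro y hy
    have hy5 : (5:ℝ) ≤ y := hy
    exact ((hasDerivAt_lobV (by linarith : (4:ℝ) < y)).differentiableAt.continuousAt).continuousWithinAt
  · intro y hy
    rw [interior_Ici] at hy
    have hy4 : (4:ℝ) < y := by have : (5:ℝ) < y := hy; linarith
    rw [(hasDerivAt_lobV hy4).deriv]
    have h1 := lobG_pos hy4
    have h2 := L_diff_pos hy4
    have h3 : 0 < y/2 * (π/y^2) := by
      have := pi_pos
      have hy0 : (0:ℝ) < y := by linarith
      positivity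
    positivity
end

section
/- The function g : ℝ → ℝ given by g(x) = 2Λ(θ_x) + Λ(θ_x + π/x) + Λ(θ_x − π/x) − Λ(2θ_x − π/2) is strictly increasing on the interval [5, ∞). -/
open Real MeasureTheory Set intervalIntegral


lemma logSinMeas : Measurable fun t : ℝ => Real.log |2 * Real.sin t| :=
  Real.measurable_log.comp ((continuous_const.mul Real.continuous_sin).measurable.abs)

lemma integrableOn_log01 : IntegrableOn Real.log (Set.Ioc (0:ℝ) 1) := by
  have h := intervalIntegral.integrableOn_deriv_of_nonneg (a := (0:ℝ)) (b := 1)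
    (g := fun t => t - t * Real.log t) (g' := fun t => -Real.log t)
    ((continuous_id.sub Real.continuous_mul_log).continuousOn)
    (fun x hx => by
      have h1 : HasDerivAt (fun t : ℝ => t * Real.log t) (Real.log x + 1) x := by
        have h2 := (hasDerivAt_id x).mul (Real.hasDerivAt_log hx.1.ne')
        have h3 : 1 * Real.log x + id x * x⁻¹ = Real.log x + 1 := by
          simp [id]; field_simp [hx.1.ne']
        rw [h3] at h2
        exact h2
      have h4 := (hasDerivAt_id x).sub h1
      show HasDerivAt _ (-Real.log x) x
      have h5 : (1 : ℝ) - (Real.log x + 1) = -Real.log x := by ring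
      rw [h5] at h4
      exact h4)
    (fun x hx => by
      show (0:ℝ) ≤ -Real.log x
      have : Real.log x ≤ 0 := Real.log_nonpos hx.1.le hx.2.le
      linarith)
  have h2 : IntegrableOn (fun t : ℝ => -(-Real.log t)) (Set.Ioc (0:ℝ) 1) := h.neg
  simpa using h2

lemma intervalIntegrable_log_abs {z : ℝ} (hz : 0 ≤ z) :
    IntervalIntegrable (fun t : ℝ => Real.log |t|) volume 0 z := by
  rcases eq_or_lt_of_le hz with h | h
  · exact h ▸ IntervalIntegrable.refl
  have h1 : IntervalIntegrable Real.log volume 0 1 := by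
    rw [intervalIntegrable_iff, uIoc_of_le zero_le_one]
    exact integrableOn_log01
  have h2 : IntervalIntegrable Real.log volume 1 z := by
    apply intervalIntegrable_log
    intro hmem
    rcases Set.mem_uIcc.mp hmem with ⟨_, h'⟩ | ⟨_, h'⟩ <;> linarith
  refine (h1.trans h2).congr ?_
  intro t ht
  rw [Set.uIoc_of_le hz] at ht
  show Real.log t = Real.log |t|
  rw [abs_of_pos ht.1]

lemma intInt {z : ℝ} (hz : |z| ≤ Real.pi / 2) :
    IntervalIntegrable (fun t : ℝ => Real.log |2 * Real.sin t|) volume 0 z := by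
  suffices H : ∀ w : ℝ, 0 ≤ w → w ≤ Real.pi / 2 →
      IntervalIntegrable (fun t : ℝ => Real.log |2 * Real.sin t|) volume 0 w by
    rcases le_or_gt 0 z with h | h
    · exact H z h (by rwa [abs_of_nonneg h] at hz)
    · have h' := H (-z) (by linarith) (by rwa [abs_of_neg h] at hz)
      rw [IntervalIntegrable.iff_comp_neg] at h'
      simpa [Real.sin_neg, mul_neg, abs_neg] using h'
  intro w hw0 hw
  have split : (fun t : ℝ => Real.log |2 * Real.sin t|) =
      (fun t : ℝ => Real.log |t| + (Real.log |2 * Real.sin t| - Real.log |t|)) := by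
    funext t; ring
  rw [split]
  refine (intervalIntegrable_log_abs hw0).add ?_
  refine IntervalIntegrable.mono_fun' (g := fun _ => Real.log 2)
    (intervalIntegrable_const) ?_ ?_
  · exact ((logSinMeas.sub (Real.measurable_log.comp measurable_abs)).aestronglyMeasurable).restrict
  · filter_upwards [ae_restrict_mem measurableSet_uIoc] with t ht
    rw [Set.uIoc_of_le hw0] at ht
    have ht0 : 0 < t := ht.1
    have htw : t ≤ Real.pi / 2 := le_trans ht.2 hw
    have hsin : 0 < Real.sin t :=
      Real.sin_pos_of_pos_of_lt_pi ht0 (lt_of_le_of_lt htw (by linarith [Real.pi_pos]))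
    have hjordan : 2 / Real.pi * t ≤ Real.sin t := Real.mul_le_sin ht0.le htw
    have hpi4 : Real.pi < 4 := by linarith [Real.pi_lt_d2]
    have hlow : t ≤ 2 * Real.sin t := by
      have hπ := Real.pi_pos
      have hj' : 2 * t / Real.pi ≤ Real.sin t := by
        rw [show 2 * t / Real.pi = 2 / Real.pi * t by ring]; exact hjordan
      rw [div_le_iff₀ hπ] at hj'
      nlinarith
    have hhigh : 2 * Real.sin t ≤ 2 * t := by nlinarith [Real.sin_le ht0.le]
    rw [abs_of_pos (by positivity : (0:ℝ) < 2 * Real.sin t), abs_of_pos ht0]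
    have heq : Real.log (2 * Real.sin t) - Real.log t = Real.log (2 * Real.sin t / t) :=
      (Real.log_div (by positivity) ht0.ne').symm
    rw [heq]
    have hr1 : 1 ≤ 2 * Real.sin t / t := (one_le_div ht0).mpr hlow
    have hr2 : 2 * Real.sin t / t ≤ 2 := by
      rw [div_le_iff₀ ht0]; nlinarith
    rw [Real.norm_eq_abs, abs_of_nonneg (Real.log_nonneg hr1)]
    exact Real.log_le_log (by positivity) hr2


lemma lob_hasDerivAt {z : ℝ} (h1 : |z| ≤ Real.pi / 2) (h0 : z ≠ 0) :
    HasDerivAt lob (-Real.log |2 * Real.sin z|) z := by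
  have hsz : Real.sin z ≠ 0 := by
    rcases lt_or_gt_of_ne h0 with h | h
    · have : 0 < Real.sin (-z) := Real.sin_pos_of_pos_of_lt_pi (by linarith)
        (by rw [abs_of_neg h] at h1; linarith [Real.pi_pos])
      rw [Real.sin_neg] at this; linarith
    · have : 0 < Real.sin z := Real.sin_pos_of_pos_of_lt_pi h
        (by rw [abs_of_pos h] at h1; linarith [Real.pi_pos])
      linarith
  have hcont : ContinuousAt (fun t : ℝ => Real.log |2 * Real.sin t|) z := by
    apply Real.continuousAt_log (by simpa using hsz) |>.comp
    exact ((continuous_abs.comp (continuous_const.mul Real.continuous_sin)).continuousAt)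
  have hmeas : StronglyMeasurableAtFilter (fun t : ℝ => Real.log |2 * Real.sin t|) (nhds z) :=
    ⟨Set.univ, Filter.univ_mem, logSinMeas.aestronglyMeasurable.restrict⟩
  have H := intervalIntegral.integral_hasDerivAt_right (intInt h1) hmeas hcont
  exact H.neg

set_option maxHeartbeats 1000000 in
lemma key {x : ℝ} (hx : 5 ≤ x) : ∃ D, HasDerivAt lobG D x ∧ 0 < D := by
  have hπ := Real.pi_pos
  have hx0 : (0:ℝ) < x := by linarith
  set p : ℝ := Real.pi / x with hp_def
  have hp0 : 0 < p := div_pos hπ hx0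
  have hp5 : p ≤ Real.pi / 5 := div_le_div_of_nonneg_left hπ.le (by norm_num) hx
  have hp4 : p < Real.pi / 4 := lt_of_le_of_lt hp5 (by linarith)
  set c : ℝ := Real.cos p with hc_def
  have hsqrt2 : (Real.sqrt 2) ^ 2 = 2 := Real.sq_sqrt (by norm_num)
  have hsqrt2_pos : 0 < Real.sqrt 2 := Real.sqrt_pos.mpr (by norm_num)
  have hsqrt2_lt : Real.sqrt 2 < 2 := by nlinarith
  have hsqrt2_gt : 1 < Real.sqrt 2 := by nlinarith
  have hc2 : Real.sqrt 2 / 2 < c := by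
    have h := Real.cos_lt_cos_of_nonneg_of_le_pi hp0.le (by linarith) hp4
    rwa [Real.cos_pi_div_four] at h
  have hc0 : 0 < c := by nlinarith
  have hc1 : c < 1 := by
    have h := Real.cos_lt_cos_of_nonneg_of_le_pi le_rfl (by linarith) hp0
    rwa [Real.cos_zero] at h
  set s : ℝ := 1 / (2 * c) with hs_def
  have hs_pos : 0 < s := by positivity
  have hs_lt : s < Real.sqrt 2 / 2 := by
    rw [hs_def, div_lt_div_iff₀ (by positivity) (by norm_num)]
    nlinarith
  have hs_lt1 : s < 1 := by nlinarith
  have htheta : theta x = Real.arcsin s := by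
    simp only [theta, Real.arccos, hs_def, hc_def, hp_def]
    ring
  set θ : ℝ := theta x with hθ_def
  have hsinθ : Real.sin θ = s := by
    rw [htheta, Real.sin_arcsin (by linarith) hs_lt1.le]
  have harc24 : Real.arcsin (Real.sqrt 2 / 2) = Real.pi / 4 := by
    rw [← Real.sin_pi_div_four, Real.arcsin_sin (by linarith) (by linarith)]
  have hθ4 : θ < Real.pi / 4 := by
    rw [htheta, ← harc24]
    exact Real.strictMonoOn_arcsin ⟨by linarith, hs_lt1.le⟩
      ⟨by linarith, by nlinarith⟩ hs_lt
  have hsin2p : Real.sin (2 * p) < 1 := by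
    have := Real.sin_lt_sin_of_lt_of_le_pi_div_two (x := 2 * p) (y := Real.pi / 2)
      (by linarith) le_rfl (by linarith)
    rwa [Real.sin_pi_div_two] at this
  have hsinp_lt : Real.sin p < s := by
    have h2 : Real.sin (2 * p) = 2 * Real.sin p * c := Real.sin_two_mul p
    rw [hs_def, lt_div_iff₀ (by positivity)]
    nlinarith
  have hθp : p < θ := by
    rw [htheta, ← Real.arcsin_sin (by linarith : -(Real.pi/2) ≤ p) (by linarith)]
    exact Real.strictMonoOn_arcsin ⟨Real.neg_one_le_sin p, Real.sin_le_one p⟩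
      ⟨by linarith, hs_lt1.le⟩ hsinp_lt
  have hθ0 : 0 < θ := lt_trans hp0 hθp
  have hs_lt_c : s < c := by
    rw [hs_def, div_lt_iff₀ (by positivity)]
    nlinarith
  have hθph : θ + p < Real.pi / 2 := by
    have harc : Real.arcsin (Real.sin (Real.pi / 2 - p)) = Real.pi / 2 - p :=
      Real.arcsin_sin (by linarith) (by linarith)
    rw [Real.sin_pi_div_two_sub] at harc
    have := Real.strictMonoOn_arcsin (a := s) (b := c) ⟨by linarith, hs_lt1.le⟩
      ⟨by linarith, hc1.le⟩ hs_lt_c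
    rw [← htheta] at *
    rw [harc] at this
    linarith
  -- derivative of p ↦ π / y
  have hpder : HasDerivAt (fun y : ℝ => Real.pi / y) (-(Real.pi / x ^ 2)) x := by
    have h := (hasDerivAt_inv hx0.ne').const_mul Real.pi
    simp only [div_eq_mul_inv]
    rw [show -(Real.pi * (x ^ 2)⁻¹) = Real.pi * -(x ^ 2)⁻¹ by ring]
    exact h
  have hcosder : HasDerivAt (fun y : ℝ => Real.cos (Real.pi / y))
      (-Real.sin p * -(Real.pi / x ^ 2)) x := by
    exact (Real.hasDerivAt_cos p).comp x hpder
  have h2c : (2 : ℝ) * c ≠ 0 := by positivity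
  have hu : HasDerivAt (fun y : ℝ => 1 / (2 * Real.cos (Real.pi / y)))
      (-(2 * (-Real.sin p * -(Real.pi / x ^ 2))) / (2 * c) ^ 2) x := by
    have h := (hcosder.const_mul 2).inv h2c
    have hf : (fun y : ℝ => 1 / (2 * Real.cos (Real.pi / y))) = (fun y => 2 * Real.cos (Real.pi / y))⁻¹ := by
      funext y; simp [one_div]
    rw [hf]; exact h
  have hsne1 : s ≠ -1 := by intro h; rw [h] at hs_pos; linarith
  have hsne2 : s ≠ 1 := by intro h; rw [h] at hs_lt1; linarith
  obtain ⟨m, htder⟩ : ∃ m, HasDerivAt theta m x := by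
    have harccos := (Real.hasDerivAt_arccos (x := s) hsne1 hsne2).comp x hu
    refine ⟨-(-(1 / Real.sqrt (1 - s ^ 2)) * (-(2 * (-Real.sin p * -(Real.pi / x ^ 2))) / (2 * c) ^ 2)), ?_⟩
    show HasDerivAt (fun y : ℝ =>
      Real.pi / 2 - Real.arccos (1 / (2 * Real.cos (Real.pi / y)))) _ x
    exact harccos.const_sub (Real.pi / 2)
  -- angle positivity facts
  have hθlt : θ < Real.pi / 2 := by linarith
  have hB : 0 < Real.sin (θ + p) :=
    Real.sin_pos_of_pos_of_lt_pi (by linarith) (by linarith)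
  have hC : 0 < Real.sin (θ - p) :=
    Real.sin_pos_of_pos_of_lt_pi (by linarith) (by linarith)
  -- lob derivatives
  have d1 : HasDerivAt lob (-Real.log |2 * Real.sin θ|) θ :=
    lob_hasDerivAt (by rw [abs_of_pos hθ0]; linarith) hθ0.ne'
  have d2 : HasDerivAt lob (-Real.log |2 * Real.sin (θ + p)|) (θ + p) :=
    lob_hasDerivAt (by rw [abs_of_pos (by linarith)]; linarith) (ne_of_gt (by linarith))
  have d3 : HasDerivAt lob (-Real.log |2 * Real.sin (θ - p)|) (θ - p) :=
    lob_hasDerivAt (by rw [abs_of_pos (by linarith)]; linarith) (ne_of_gt (by linarith))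
  have d4 : HasDerivAt lob (-Real.log |2 * Real.sin (2 * θ - Real.pi / 2)|)
      (2 * θ - Real.pi / 2) :=
    lob_hasDerivAt (by rw [abs_of_neg (by linarith)]; linarith) (ne_of_lt (by linarith))
  have D1 : HasDerivAt (fun y => lob (theta y)) (-Real.log |2 * Real.sin θ| * m) x :=
    d1.comp (h₂ := lob) x htder
  have D2 : HasDerivAt (fun y => lob (theta y + Real.pi / y))
      (-Real.log |2 * Real.sin (θ + p)| * (m + -(Real.pi / x ^ 2))) x :=
    d2.comp (h₂ := lob) x (htder.add hpder)
  have D3 : HasDerivAt (fun y => lob (theta y - Real.pi / y))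
      (-Real.log |2 * Real.sin (θ - p)| * (m - -(Real.pi / x ^ 2))) x :=
    d3.comp (h₂ := lob) x (htder.sub hpder)
  have D4 : HasDerivAt (fun y => lob (2 * theta y - Real.pi / 2))
      (-Real.log |2 * Real.sin (2 * θ - Real.pi / 2)| * (2 * m)) x :=
    d4.comp (h₂ := lob) x ((htder.const_mul 2).sub_const (Real.pi / 2))
  have DT : HasDerivAt lobG
      (2 * (-Real.log |2 * Real.sin θ| * m)
        + -Real.log |2 * Real.sin (θ + p)| * (m + -(Real.pi / x ^ 2))
        + -Real.log |2 * Real.sin (θ - p)| * (m - -(Real.pi / x ^ 2))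
        - -Real.log |2 * Real.sin (2 * θ - Real.pi / 2)| * (2 * m)) x := by
    unfold lobG
    exact (((D1.const_mul 2).add D2).add D3).sub D4
  -- rewrite absolute values
  have hsin4 : Real.sin (2 * θ - Real.pi / 2) = -(1 - 2 * s ^ 2) := by
    rw [Real.sin_sub_pi_div_two, Real.cos_two_mul]
    nlinarith [Real.sin_sq_add_cos_sq θ, hsinθ]
  have hE_pos : 0 < 1 - 2 * s ^ 2 := by nlinarith
  have hLθ : Real.log |2 * Real.sin θ| = Real.log (2 * s) := by
    rw [hsinθ, abs_of_pos (by positivity)]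
  have hLB : Real.log |2 * Real.sin (θ + p)| = Real.log (2 * Real.sin (θ + p)) := by
    rw [abs_of_pos (by positivity)]
  have hLC : Real.log |2 * Real.sin (θ - p)| = Real.log (2 * Real.sin (θ - p)) := by
    rw [abs_of_pos (by positivity)]
  have hLE : Real.log |2 * Real.sin (2 * θ - Real.pi / 2)| =
      Real.log (2 * (1 - 2 * s ^ 2)) := by
    rw [hsin4, mul_neg, abs_neg, abs_of_pos (by positivity)]
  rw [hLθ, hLB, hLC, hLE] at DT
  -- the key cancellation identity
  have hsp2 : Real.sin p ^ 2 = 1 - c ^ 2 := by nlinarith [Real.sin_sq_add_cos_sq p]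
  have hprod : Real.sin (θ + p) * Real.sin (θ - p) = s ^ 2 - Real.sin p ^ 2 := by
    rw [Real.sin_add, Real.sin_sub, ← hsinθ]
    nlinarith [Real.sin_sq_add_cos_sq θ, Real.sin_sq_add_cos_sq p]
  have hkey : (2 * s) ^ 2 * ((2 * Real.sin (θ + p)) * (2 * Real.sin (θ - p)))
      = (2 * (1 - 2 * s ^ 2)) ^ 2 := by
    rw [show (2 * Real.sin (θ + p)) * (2 * Real.sin (θ - p))
        = 4 * (Real.sin (θ + p) * Real.sin (θ - p)) by ring, hprod, hsp2, hs_def]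
    field_simp
    ring
  have hlog_sum : 2 * Real.log (2 * s) + Real.log (2 * Real.sin (θ + p))
      + Real.log (2 * Real.sin (θ - p)) = 2 * Real.log (2 * (1 - 2 * s ^ 2)) := by
    have hlog := congrArg Real.log hkey
    rw [Real.log_mul (by positivity) (by positivity),
      Real.log_mul (by positivity) (by positivity), Real.log_pow, Real.log_pow] at hlog
    push_cast at hlog
    linarith
  refine ⟨(Real.pi / x ^ 2) *
      (Real.log (2 * Real.sin (θ + p)) - Real.log (2 * Real.sin (θ - p))), ?_, ?_⟩
  · have heq : 2 * (-Real.log (2 * s) * m)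
        + -Real.log (2 * Real.sin (θ + p)) * (m + -(Real.pi / x ^ 2))
        + -Real.log (2 * Real.sin (θ - p)) * (m - -(Real.pi / x ^ 2))
        - -Real.log (2 * (1 - 2 * s ^ 2)) * (2 * m)
        = (Real.pi / x ^ 2) *
          (Real.log (2 * Real.sin (θ + p)) - Real.log (2 * Real.sin (θ - p))) := by
      linear_combination (-m) * hlog_sum
    rwa [heq] at DT
  · have hlt : Real.sin (θ - p) < Real.sin (θ + p) :=
      Real.sin_lt_sin_of_lt_of_le_pi_div_two (by linarith) (by linarith) (by linarith)
    have : Real.log (2 * Real.sin (θ - p)) < Real.log (2 * Real.sin (θ + p)) :=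
      Real.log_lt_log (by positivity) (by linarith)
    have hx2 : 0 < Real.pi / x ^ 2 := by positivity
    exact mul_pos hx2 (by linarith)

/-- The function `g` is strictly increasing on `[5, ∞)`. -/
theorem lobG_strictMonoOn : StrictMonoOn lobG (Set.Ici (5 : ℝ)) := by
  apply strictMonoOn_of_deriv_pos (convex_Ici 5)
  · intro y hy
    obtain ⟨D, hD, _⟩ := key hy
    exact hD.continuousAt.continuousWithinAt
  · intro y hy
    rw [interior_Ici] at hy
    obtain ⟨D, hD, hpos⟩ := key (le_of_lt hy)
    rwa [hD.deriv]
end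

section
/- One has 2·v(5) > v(6), where v(x) = (x/2)·(2Λ(θ_x) + Λ(θ_x + π/x) + Λ(θ_x − π/x) − Λ(2θ_x − π/2)); that is, twice the hyperbolic volume of the right-angled dodecahedron L(5) strictly exceeds the hyperbolic volume of the Löbell polyhedron L(6). (This is the key inequality showing that any composition of two copies of L(5) has volume larger than L(6).) -/
open Real Set MeasureTheory intervalIntegral

/-! ### Auxiliary lemmas -/

lemma sin_ge_poly {t : ℝ} (ht : 0 ≤ t) : t - t^3/6 ≤ Real.sin t := by
  have hF : ∀ x : ℝ, HasDerivAt (fun x => Real.sin x - x + x^3/6)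
      (Real.cos x - 1 + x^2/2) x := by
    intro x
    have h := ((Real.hasDerivAt_sin x).sub (hasDerivAt_id x)).add
      ((hasDerivAt_pow 3 x).div_const 6)
    exact h.congr_deriv (by ring)
  have mono : Monotone (fun x => Real.sin x - x + x^3/6) :=
    monotone_of_deriv_nonneg (fun x => (hF x).differentiableAt)
      (fun x => by
        rw [(hF x).deriv]
        nlinarith [Real.one_sub_sq_div_two_le_cos (x := x)])
  have h0 := mono ht
  simp only [Real.sin_zero] at h0
  nlinarith [h0]

lemma cos_le_poly {t : ℝ} (ht : 0 ≤ t) : Real.cos t ≤ 1 - t^2/2 + t^4/24 := by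
  have hF : ∀ x : ℝ, HasDerivAt (fun x => 1 - x^2/2 + x^4/24 - Real.cos x)
      (-x + x^3/6 + Real.sin x) x := by
    intro x
    have h := (((hasDerivAt_const x (1:ℝ)).sub ((hasDerivAt_pow 2 x).div_const 2)).add
      ((hasDerivAt_pow 4 x).div_const 24)).sub (Real.hasDerivAt_cos x)
    exact h.congr_deriv (by push_cast; ring)
  have mono : MonotoneOn (fun x => 1 - x^2/2 + x^4/24 - Real.cos x) (Ici 0) := by
    apply monotoneOn_of_deriv_nonneg (convex_Ici 0)
    · exact (Continuous.continuousOn (by continuity))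
    · exact fun x _ => (hF x).differentiableAt.differentiableWithinAt
    · intro x hx
      rw [interior_Ici] at hx
      rw [(hF x).deriv]
      nlinarith [sin_ge_poly hx.le, le_of_lt (show (0:ℝ) < x from hx)]
  have h0 := mono (self_mem_Ici) ht ht
  simp only [Real.cos_zero] at h0
  nlinarith [h0]

lemma sin_le_poly {t : ℝ} (ht : 0 ≤ t) : Real.sin t ≤ t - t^3/6 + t^5/120 := by
  have hF : ∀ x : ℝ, HasDerivAt (fun x => x - x^3/6 + x^5/120 - Real.sin x)
      (1 - x^2/2 + x^4/24 - Real.cos x) x := by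
    intro x
    have h := (((hasDerivAt_id x).sub ((hasDerivAt_pow 3 x).div_const 6)).add
      ((hasDerivAt_pow 5 x).div_const 120)).sub (Real.hasDerivAt_sin x)
    exact h.congr_deriv (by push_cast; ring)
  have mono : MonotoneOn (fun x => x - x^3/6 + x^5/120 - Real.sin x) (Ici 0) := by
    apply monotoneOn_of_deriv_nonneg (convex_Ici 0)
    · exact (Continuous.continuousOn (by continuity))
    · exact fun x _ => (hF x).differentiableAt.differentiableWithinAt
    · intro x hx
      rw [interior_Ici] at hx
      rw [(hF x).deriv]
      nlinarith [cos_le_poly hx.le]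
  have h0 := mono (self_mem_Ici) ht ht
  simp only [Real.sin_zero] at h0
  nlinarith [h0]


lemma intInt_log {w : ℝ} (h0 : 0 ≤ w) (h2 : w ≤ 2.7) :
    IntervalIntegrable Real.log volume 0 w := by
  have hg : IntervalIntegrable (fun t : ℝ => 3 * t ^ (-(1:ℝ)/2)) volume 0 w :=
    (intervalIntegrable_rpow' (by norm_num)).const_mul 3
  apply hg.mono_fun' Real.measurable_log.aestronglyMeasurable
  rw [uIoc_of_le h0]
  filter_upwards [ae_restrict_mem measurableSet_Ioc] with t ht
  obtain ⟨ht0, htw⟩ := ht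
  have hs : (0:ℝ) < Real.sqrt t := Real.sqrt_pos.2 ht0
  have hs2 : Real.sqrt t ^ 2 = t := Real.sq_sqrt ht0.le
  have hrw : t ^ (-(1:ℝ)/2) = (Real.sqrt t)⁻¹ := by
    rw [show (-(1:ℝ)/2) = -(1/2) by norm_num, Real.rpow_neg ht0.le, ← Real.sqrt_eq_rpow]
  rw [Real.norm_eq_abs, hrw]
  rcases le_or_gt t 1 with h1 | h1
  · have hlog : Real.log t = 2 * Real.log (Real.sqrt t) := by
      rw [Real.log_sqrt ht0.le]; ring
    have hl : 1 - (Real.sqrt t)⁻¹ ≤ Real.log (Real.sqrt t) :=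
      Real.one_sub_inv_le_log_of_pos hs
    have hneg : Real.log t ≤ 0 := Real.log_nonpos ht0.le h1
    rw [abs_of_nonpos hneg]
    rw [hlog]
    have : (Real.sqrt t)⁻¹ ≥ 0 := by positivity
    nlinarith
  · have hpos : 0 ≤ Real.log t := Real.log_nonneg h1.le
    rw [abs_of_nonneg hpos]
    have h3 : Real.log t ≤ t - 1 := Real.log_le_sub_one_of_pos ht0
    have h4 : Real.sqrt t ≤ 1.7 := by
      nlinarith [hs2, hs.le]
    have h5 : ((1.7:ℝ))⁻¹ ≤ (Real.sqrt t)⁻¹ := inv_anti₀ hs h4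
    nlinarith [hs.le]

lemma intInt_log2 {z : ℝ} (h0 : 0 ≤ z) (hz : z ≤ 1.35) :
    IntervalIntegrable (fun t => Real.log (2*t)) volume 0 z := by
  have h := (intInt_log (w := 2*z) (by linarith) (by linarith)).comp_mul_left (c := 2)
  simpa using h

lemma intInt_f {z : ℝ} (h0 : 0 ≤ z) (hz : z ≤ 1.35) :
    IntervalIntegrable (fun t => Real.log |2 * Real.sin t|) volume 0 z := by
  have hg : IntervalIntegrable (fun t : ℝ => |Real.log t| + 1) volume 0 z :=
    ((intInt_log h0 (by linarith)).abs).add intervalIntegrable_const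
  apply hg.mono_fun'
  · exact (Real.measurable_log.comp
      ((continuous_const.mul Real.continuous_sin).abs.measurable)).aestronglyMeasurable
  rw [uIoc_of_le h0]
  filter_upwards [ae_restrict_mem measurableSet_Ioc] with t ht
  obtain ⟨ht0, htz⟩ := ht
  have hπ : t < Real.pi := by nlinarith [Real.pi_gt_three]
  have hsin : 0 < Real.sin t := Real.sin_pos_of_pos_of_lt_pi ht0 hπ
  have habs : |2 * Real.sin t| = 2 * Real.sin t := abs_of_pos (by linarith)
  have hup : Real.log (2 * Real.sin t) ≤ Real.log 2 + Real.log t := by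
    rw [← Real.log_mul (by norm_num) (ne_of_gt ht0)]
    exact (Real.log_le_log_iff (by linarith) (by linarith)).2
      (by nlinarith [Real.sin_le ht0.le])
  have hlo : Real.log t ≤ Real.log (2 * Real.sin t) := by
    apply (Real.log_le_log_iff ht0 (by linarith)).2
    nlinarith [sin_ge_poly ht0.le, mul_pos ht0 ht0, sq_nonneg (t-1.35), sq_nonneg t]
  rw [Real.norm_eq_abs, habs]
  have h2 : Real.log 2 ≤ 1 := by
    nlinarith [Real.log_le_sub_one_of_pos (show (0:ℝ) < 2 by norm_num)]
  rw [abs_le]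
  constructor
  · nlinarith [neg_abs_le (Real.log t)]
  · nlinarith [le_abs_self (Real.log t)]



lemma integral_log2_poly {z : ℝ} (h0 : 0 < z) (hz : z ≤ 1.35) (c2 c4 : ℝ) :
    ∫ t in (0:ℝ)..z, (Real.log (2*t) + c2*t^2 + c4*t^4)
      = z*Real.log (2*z) - z + c2*z^3/3 + c4*z^5/5 := by
  have hint : IntervalIntegrable (fun t => Real.log (2*t) + c2*t^2 + c4*t^4) volume 0 z :=
    ((intInt_log2 h0.le hz).add (((continuous_const.mul (continuous_pow 2)).intervalIntegrable
      0 z))).add ((continuous_const.mul (continuous_pow 4)).intervalIntegrable 0 z)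
  have key := integral_eq_sub_of_hasDeriv_right_of_le (f := fun t =>
      t * Real.log t + (Real.log 2 - 1)*t + c2*t^3/3 + c4*t^5/5)
      (f' := fun t => Real.log (2*t) + c2*t^2 + c4*t^4) h0.le
    (by
      apply Continuous.continuousOn
      exact ((Real.continuous_mul_log.add (continuous_const.mul continuous_id)).add
        ((continuous_const.mul (continuous_pow 3)).div_const 3)).add
        ((continuous_const.mul (continuous_pow 5)).div_const 5))
    (by
      intro x hx
      have hd : HasDerivAt (fun t : ℝ =>
          t * Real.log t + (Real.log 2 - 1)*t + c2*t^3/3 + c4*t^5/5)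
          ((Real.log x + 1) + (Real.log 2 - 1) + c2*(3*x^2)/3 + c4*(5*x^4)/5) x := by
        have h := (((Real.hasDerivAt_mul_log (ne_of_gt hx.1)).add
          ((hasDerivAt_id x).const_mul (Real.log 2 - 1))).add
          (((hasDerivAt_pow 3 x).const_mul c2).div_const 3)).add
          (((hasDerivAt_pow 5 x).const_mul c4).div_const 5)
        exact h.congr_deriv (by push_cast; ring)
      have heq : Real.log (2*x) + c2*x^2 + c4*x^4
          = (Real.log x + 1) + (Real.log 2 - 1) + c2*(3*x^2)/3 + c4*(5*x^4)/5 := by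
        rw [Real.log_mul (by norm_num) (ne_of_gt hx.1)]
        push_cast
        ring
      show HasDerivWithinAt _ (Real.log (2*x) + c2*x^2 + c4*x^4) (Ioi x) x
      rw [heq]
      exact hd.hasDerivWithinAt)
    hint
  rw [key]
  rw [Real.log_mul (by norm_num) (ne_of_gt h0)]
  simp [Real.log_zero]
  ring



lemma sin_pos_aux {x : ℝ} (h0 : 0 < x) (h1 : x ≤ 1.31) : 0 < Real.sin x :=
  Real.sin_pos_of_pos_of_lt_pi h0 (by nlinarith [Real.pi_gt_three])

lemma lob_lower {z : ℝ} (h0 : 0 < z) (hz : z ≤ 1.31) :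
    z - z*Real.log (2*z) + z^3/18 - z^5/600 ≤ lob z := by
  have hcomp : ∫ t in (0:ℝ)..z, Real.log |2 * Real.sin t|
      ≤ ∫ t in (0:ℝ)..z, (Real.log (2*t) + (-1/6)*t^2 + (1/120)*t^4) := by
    apply integral_mono_on h0.le (intInt_f h0.le (by linarith))
      (((intInt_log2 h0.le (by linarith)).add (((continuous_const.mul
        (continuous_pow 2)).intervalIntegrable 0 z))).add
        ((continuous_const.mul (continuous_pow 4)).intervalIntegrable 0 z))
    intro x hx
    rcases eq_or_lt_of_le hx.1 with h | hxpos
    · simp [← h]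
    have hxz : x ≤ 1.31 := le_trans hx.2 hz
    have hsin : 0 < Real.sin x := sin_pos_aux hxpos hxz
    have habs : |2 * Real.sin x| = 2 * Real.sin x := abs_of_pos (by linarith)
    rw [habs]
    have hP : (0:ℝ) < 1 - x^2/6 + x^4/120 := by nlinarith
    have h1 : Real.log (2 * Real.sin x) ≤ Real.log ((2*x) * (1 - x^2/6 + x^4/120)) := by
      apply (Real.log_le_log_iff (by linarith) (by positivity)).2
      nlinarith [sin_le_poly hxpos.le]
    have h2 : Real.log ((2*x) * (1 - x^2/6 + x^4/120))
        = Real.log (2*x) + Real.log (1 - x^2/6 + x^4/120) :=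
      Real.log_mul (by positivity) (ne_of_gt hP)
    have h3 : Real.log (1 - x^2/6 + x^4/120) ≤ -x^2/6 + x^4/120 := by
      have := Real.log_le_sub_one_of_pos hP
      linarith
    calc Real.log (2 * Real.sin x) ≤ Real.log (2*x) + Real.log (1 - x^2/6 + x^4/120) := by
          rw [← h2]; exact h1
      _ ≤ Real.log (2*x) + (-1/6)*x^2 + (1/120)*x^4 := by linarith
  rw [integral_log2_poly h0 (by linarith)] at hcomp
  unfold lob
  linarith [hcomp]

lemma lob_upper {z : ℝ} (h0 : 0 < z) (hz : z ≤ 1.31) :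
    lob z ≤ z - z*Real.log (2*z) + z^3/(3*(6-z^2)) := by
  have hz6 : (0:ℝ) < 6 - z^2 := by nlinarith
  have hcomp : ∫ t in (0:ℝ)..z, (Real.log (2*t) + (-(6-z^2)⁻¹)*t^2 + (0:ℝ)*t^4)
      ≤ ∫ t in (0:ℝ)..z, Real.log |2 * Real.sin t| := by
    apply integral_mono_on h0.le
      (((intInt_log2 h0.le (by linarith)).add (((continuous_const.mul
        (continuous_pow 2)).intervalIntegrable 0 z))).add
        ((continuous_const.mul (continuous_pow 4)).intervalIntegrable 0 z))
      (intInt_f h0.le (by linarith))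
    intro x hx
    rcases eq_or_lt_of_le hx.1 with h | hxpos
    · simp [← h]
    have hxz : x ≤ 1.31 := le_trans hx.2 hz
    have hsin : 0 < Real.sin x := sin_pos_aux hxpos hxz
    have habs : |2 * Real.sin x| = 2 * Real.sin x := abs_of_pos (by linarith)
    rw [habs]
    have hP : (0:ℝ) < 1 - x^2/6 := by nlinarith
    have h1 : Real.log ((2*x) * (1 - x^2/6)) ≤ Real.log (2 * Real.sin x) := by
      apply (Real.log_le_log_iff (by positivity) (by linarith)).2
      nlinarith [sin_ge_poly hxpos.le]
    have h2 : Real.log ((2*x) * (1 - x^2/6))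
        = Real.log (2*x) + Real.log (1 - x^2/6) :=
      Real.log_mul (by positivity) (ne_of_gt hP)
    have h3 : 1 - (1 - x^2/6)⁻¹ ≤ Real.log (1 - x^2/6) :=
      Real.one_sub_inv_le_log_of_pos hP
    have h4 : -(6-z^2)⁻¹*x^2 ≤ 1 - (1 - x^2/6)⁻¹ := by
      have hx6 : (0:ℝ) < 6 - x^2 := by nlinarith
      have hxz2 : x^2 ≤ z^2 := by nlinarith [hx.1, hx.2]
      have e1 : (1 - x^2/6)⁻¹ = 6/(6-x^2) := by
        rw [show 1 - x^2/6 = (6-x^2)/6 by ring, inv_div]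
      rw [e1, div_eq_mul_inv]
      have hinv : (6-x^2)⁻¹ ≤ (6-z^2)⁻¹ := inv_anti₀ hz6 (by nlinarith)
      have hcancel : (6-x^2) * (6-x^2)⁻¹ = 1 := mul_inv_cancel₀ (ne_of_gt hx6)
      nlinarith [mul_le_mul_of_nonneg_left hinv (sq_nonneg x)]
    calc Real.log (2*x) + (-(6-z^2)⁻¹)*x^2 + (0:ℝ)*x^4
        ≤ Real.log (2*x) + Real.log (1 - x^2/6) := by push_cast; nlinarith
      _ = Real.log ((2*x) * (1 - x^2/6)) := h2.symm
      _ ≤ Real.log (2 * Real.sin x) := h1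
  rw [integral_log2_poly h0 (by linarith)] at hcomp
  unfold lob
  have hfin : -(6-z^2)⁻¹*z^3/3 = -(z^3/(3*(6-z^2))) := by
    field_simp
  rw [hfin] at hcomp
  linarith [hcomp]


lemma lob_neg (z : ℝ) : lob (-z) = - lob z := by
  unfold lob
  have h := intervalIntegral.integral_comp_neg (a := (0:ℝ)) (b := z)
    (fun t => Real.log |2 * Real.sin t|)
  simp only [Real.sin_neg, mul_neg, abs_neg, neg_zero] at h
  have h2 := intervalIntegral.integral_symm (f := fun t => Real.log |2 * Real.sin t|)
    (μ := MeasureTheory.volume) (0:ℝ) (-z)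
  linarith [h, h2]

lemma log_num_ub {x y : ℝ} (hx : 0 < x) (hy : 0 < y) (h : x ≤ y^64) :
    Real.log x ≤ 64*(y-1) := by
  have h1 : Real.log x ≤ Real.log (y^64) :=
    (Real.log_le_log_iff hx (pow_pos hy 64)).2 h
  rw [Real.log_pow] at h1
  push_cast at h1
  nlinarith [Real.log_le_sub_one_of_pos hy]

lemma log_num_lb {x y : ℝ} (hy : 0 < y) (h : y^64 ≤ x) :
    64*(1-y⁻¹) ≤ Real.log x := by
  have hx : 0 < x := lt_of_lt_of_le (pow_pos hy 64) h
  have h1 : Real.log (y^64) ≤ Real.log x := (Real.log_le_log_iff (pow_pos hy 64) hx).2 h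
  rw [Real.log_pow] at h1
  push_cast at h1
  nlinarith [Real.one_sub_inv_le_log_of_pos hy]

lemma sin_num_ub {x : ℝ} (h0 : 0 ≤ x) (h1 : x ≤ 1) :
    Real.sin x ≤ x - x^3/6 + x^4*(5/96) := by
  have hb := Real.sin_bound (x := x) (by rw [abs_of_nonneg h0]; exact h1)
  rw [abs_of_nonneg h0] at hb
  linarith [(abs_sub_le_iff.1 hb).1, pow_le_pow_of_le_one h0 h1 (show 4 ≤ 5 by norm_num), pow_nonneg h0 4]

lemma sin_num_lb {x : ℝ} (h0 : 0 ≤ x) (h1 : x ≤ 1) :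
    x - x^3/6 - x^4*(5/96) ≤ Real.sin x := by
  have hb := Real.sin_bound (x := x) (by rw [abs_of_nonneg h0]; exact h1)
  rw [abs_of_nonneg h0] at hb
  linarith [(abs_sub_le_iff.1 hb).2, pow_le_pow_of_le_one h0 h1 (show 4 ≤ 5 by norm_num), pow_nonneg h0 4]

lemma cos_num_ub {x : ℝ} (h0 : 0 ≤ x) (h1 : x ≤ 1) :
    Real.cos x ≤ 1 - x^2/2 + x^4*(5/96) := by
  have hb := Real.cos_bound (x := x) (by rw [abs_of_nonneg h0]; exact h1)
  rw [abs_of_nonneg h0] at hb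
  linarith [(abs_sub_le_iff.1 hb).1]

lemma cos_num_lb {x : ℝ} (h0 : 0 ≤ x) (h1 : x ≤ 1) :
    1 - x^2/2 - x^4*(5/96) ≤ Real.cos x := by
  have hb := Real.cos_bound (x := x) (by rw [abs_of_nonneg h0]; exact h1)
  rw [abs_of_nonneg h0] at hb
  linarith [(abs_sub_le_iff.1 hb).2]

/-- numeric bound on `sin` of a doubled value, upper -/
lemma sin_double_ub {h : ℝ} (h0 : 0 < h) (h1 : h ≤ 1) :
    Real.sin (2*h) ≤ 2*(h - h^3/6 + h^4*(5/96))*(1 - h^2/2 + h^4*(5/96)) := by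
  rw [Real.sin_two_mul]
  have hS := sin_num_ub h0.le h1
  have hC := cos_num_ub h0.le h1
  have hSpos : 0 ≤ Real.sin h := Real.sin_nonneg_of_nonneg_of_le_pi h0.le
    (by nlinarith [Real.pi_gt_three])
  have hCpos : 0 ≤ Real.cos h := by nlinarith [Real.one_sub_sq_div_two_le_cos (x := h)]
  nlinarith [mul_le_mul hS hC hCpos (by nlinarith)]

lemma sin_double_lb {h : ℝ} (h0 : 0 < h) (h1 : h ≤ 1)
    (hS0 : 0 ≤ h - h^3/6 - h^4*(5/96)) (hC0 : 0 ≤ 1 - h^2/2 - h^4*(5/96)) :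
    2*(h - h^3/6 - h^4*(5/96))*(1 - h^2/2 - h^4*(5/96)) ≤ Real.sin (2*h) := by
  rw [Real.sin_two_mul]
  have hS := sin_num_lb h0.le h1
  have hC := cos_num_lb h0.le h1
  have hSpos : 0 ≤ Real.sin h := by linarith
  nlinarith [mul_le_mul hS hC hC0 hSpos]

lemma arcsin_ge_of_sin_le {a c : ℝ} (ha1 : -(Real.pi/2) ≤ a) (ha2 : a ≤ Real.pi/2)
    (h : Real.sin a ≤ c) : a ≤ Real.arcsin c := by
  calc a = Real.arcsin (Real.sin a) := (Real.arcsin_sin ha1 ha2).symm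
    _ ≤ Real.arcsin c := Real.monotone_arcsin h

lemma arcsin_le_of_le_sin {b c : ℝ} (hb1 : -(Real.pi/2) ≤ b) (hb2 : b ≤ Real.pi/2)
    (h : c ≤ Real.sin b) : Real.arcsin c ≤ b := by
  calc Real.arcsin c ≤ Real.arcsin (Real.sin b) := Real.monotone_arcsin h
    _ = b := Real.arcsin_sin hb1 hb2

lemma theta5_mem : 0.664686 ≤ theta 5 ∧ theta 5 ≤ 0.668868 := by
  have hs5 : Real.sqrt 5 ^ 2 = 5 := Real.sq_sqrt (by norm_num)
  have hs50 : 0 ≤ Real.sqrt 5 := Real.sqrt_nonneg 5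
  have hs5a : (2.2360679:ℝ) ≤ Real.sqrt 5 := by nlinarith
  have hs5b : Real.sqrt 5 ≤ 2.2360680 := by nlinarith
  have hcos : Real.cos (Real.pi/5) = (1 + Real.sqrt 5)/4 := Real.cos_pi_div_five
  have hc : 1/(2*Real.cos (Real.pi/5)) = (Real.sqrt 5 - 1)/2 := by
    rw [hcos]
    rw [div_eq_div_iff (by nlinarith) (by norm_num)]
    nlinarith
  have hteq : theta 5 = Real.arcsin ((Real.sqrt 5 - 1)/2) := by
    unfold theta
    rw [hc, Real.arccos_eq_pi_div_two_sub_arcsin]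
    ring
  have hpi3 := Real.pi_gt_three
  constructor
  · rw [hteq]
    apply arcsin_ge_of_sin_le (by linarith) (by linarith)
    have key := sin_double_ub (h := 0.332343) (by norm_num) (by norm_num)
    norm_num at key ⊢
    nlinarith
  · rw [hteq]
    apply arcsin_le_of_le_sin (by linarith) (by linarith)
    have key := sin_double_lb (h := 0.334434) (by norm_num) (by norm_num)
      (by norm_num) (by norm_num)
    norm_num at key ⊢
    nlinarith

lemma theta6_mem : 0.61438 ≤ theta 6 ∧ theta 6 ≤ 0.61727 := by
  have hs3 : Real.sqrt 3 ^ 2 = 3 := Real.sq_sqrt (by norm_num)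
  have hs30 : 0 ≤ Real.sqrt 3 := Real.sqrt_nonneg 3
  have hs3a : (1.7320508:ℝ) ≤ Real.sqrt 3 := by nlinarith
  have hs3b : Real.sqrt 3 ≤ 1.7320509 := by nlinarith
  have hcos : Real.cos (Real.pi/6) = Real.sqrt 3/2 := Real.cos_pi_div_six
  have hc : 1/(2*Real.cos (Real.pi/6)) = Real.sqrt 3/3 := by
    rw [hcos]
    rw [div_eq_div_iff (by nlinarith) (by norm_num)]
    nlinarith
  have hteq : theta 6 = Real.arcsin (Real.sqrt 3/3) := by
    unfold theta
    rw [hc, Real.arccos_eq_pi_div_two_sub_arcsin]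
    ring
  have hpi3 := Real.pi_gt_three
  constructor
  · rw [hteq]
    apply arcsin_ge_of_sin_le (by linarith) (by linarith)
    have key := sin_double_ub (h := 0.307190) (by norm_num) (by norm_num)
    norm_num at key ⊢
    nlinarith
  · rw [hteq]
    apply arcsin_le_of_le_sin (by linarith) (by linarith)
    have key := sin_double_lb (h := 0.308635) (by norm_num) (by norm_num)
      (by norm_num) (by norm_num)
    norm_num at key ⊢
    nlinarith


/-! ### per-term interval bounds -/

lemma term_lower_big {z a b LU : ℝ} (ha : a ≤ z) (hb : z ≤ b) (h05 : 1/2 ≤ a)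
    (hb13 : b ≤ 1.31) (hy : Real.log (2*b) ≤ LU) (hLU : 0 ≤ LU) :
    a - b*LU + a^3/18 - b^5/600 ≤ lob z := by
  have h0 : 0 < z := by linarith
  have hlb := lob_lower h0 (le_trans hb hb13)
  have hmono : Real.log (2*z) ≤ Real.log (2*b) :=
    (Real.log_le_log_iff (by linarith) (by linarith)).2 (by linarith)
  have hlog_ub : Real.log (2*z) ≤ LU := le_trans hmono hy
  have hlog_lb : 0 ≤ Real.log (2*z) := Real.log_nonneg (by linarith)
  have p1 : z*Real.log (2*z) ≤ z*LU := mul_le_mul_of_nonneg_left hlog_ub h0.le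
  have p2 : z*LU ≤ b*LU := mul_le_mul_of_nonneg_right hb hLU
  have p3 : a^3 ≤ z^3 := pow_le_pow_left₀ (by linarith) ha 3
  have p4 : z^5 ≤ b^5 := pow_le_pow_left₀ h0.le hb 5
  linarith

lemma term_lower_small {z a b LU : ℝ} (ha : a ≤ z) (hb : z ≤ b) (h0a : 0 < a)
    (hb05 : b ≤ 1/2) (hy : Real.log (2*b) ≤ LU) (hLU : LU ≤ 0) :
    a - a*LU + a^3/18 - b^5/600 ≤ lob z := by
  have h0 : 0 < z := by linarith
  have hlb := lob_lower h0 (by linarith)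
  have hmono : Real.log (2*z) ≤ Real.log (2*b) :=
    (Real.log_le_log_iff (by linarith) (by linarith)).2 (by linarith)
  have hlog_ub : Real.log (2*z) ≤ LU := le_trans hmono hy
  have p1 : z*Real.log (2*z) ≤ z*LU := mul_le_mul_of_nonneg_left hlog_ub h0.le
  have p2 : z*LU ≤ a*LU := mul_le_mul_of_nonpos_right ha hLU
  have p3 : a^3 ≤ z^3 := pow_le_pow_left₀ h0a.le ha 3
  have p4 : z^5 ≤ b^5 := pow_le_pow_left₀ h0.le hb 5
  linarith

lemma term_upper_big {z a b LL : ℝ} (ha : a ≤ z) (hb : z ≤ b) (h05 : 1/2 ≤ a)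
    (hb13 : b ≤ 1.31) (hy : LL ≤ Real.log (2*a)) (hLL : 0 ≤ LL) :
    lob z ≤ b - a*LL + b^3/(3*(6-b^2)) := by
  have h0 : 0 < z := by linarith
  have hub := lob_upper h0 (le_trans hb hb13)
  have hmono : Real.log (2*a) ≤ Real.log (2*z) :=
    (Real.log_le_log_iff (by linarith) (by linarith)).2 (by linarith)
  have hlog_lb : LL ≤ Real.log (2*z) := le_trans hy hmono
  have p1 : a*LL ≤ z*LL := mul_le_mul_of_nonneg_right ha hLL
  have p2 : z*LL ≤ z*Real.log (2*z) := mul_le_mul_of_nonneg_left hlog_lb h0.le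
  have p3 : z^3 ≤ b^3 := pow_le_pow_left₀ h0.le hb 3
  have p4 : z^3/(3*(6-z^2)) ≤ b^3/(3*(6-b^2)) := by
    have hb3 : (0:ℝ) ≤ b^3 := pow_nonneg (by linarith) 3
    apply div_le_div₀ hb3 p3 (by nlinarith) (by nlinarith [sq_nonneg z, ha])
  linarith

lemma term_upper_small {z a b LL : ℝ} (ha : a ≤ z) (hb : z ≤ b) (h0a : 0 < a)
    (hb05 : b ≤ 1/2) (hy : LL ≤ Real.log (2*a)) (hLL : LL ≤ 0) :
    lob z ≤ b - b*LL + b^3/(3*(6-b^2)) := by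
  have h0 : 0 < z := by linarith
  have hub := lob_upper h0 (by linarith)
  have hmono : Real.log (2*a) ≤ Real.log (2*z) :=
    (Real.log_le_log_iff (by linarith) (by linarith)).2 (by linarith)
  have hlog_lb : LL ≤ Real.log (2*z) := le_trans hy hmono
  have p2 : z*LL ≤ z*Real.log (2*z) := mul_le_mul_of_nonneg_left hlog_lb h0.le
  have p1 : b*LL ≤ z*LL := mul_le_mul_of_nonpos_right hb hLL
  have p3 : z^3 ≤ b^3 := pow_le_pow_left₀ h0.le hb 3
  have p4 : z^3/(3*(6-z^2)) ≤ b^3/(3*(6-b^2)) := by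
    have hb3 : (0:ℝ) ≤ b^3 := pow_nonneg (by linarith) 3
    apply div_le_div₀ hb3 p3 (by nlinarith) (by nlinarith [sq_nonneg z, h0a, ha])
  linarith

/-- Twice the volume of the right-angled dodecahedron `L(5)` strictly exceeds the volume
of the Löbell polyhedron `L(6)`. -/
theorem two_vol_dodecahedron_gt_vol_lobell_six : 2 * lobV 5 > lobV 6 := by
  obtain ⟨ha5, hb5⟩ := theta5_mem
  obtain ⟨ha6, hb6⟩ := theta6_mem
  have hpi1 : (3.141592:ℝ) < Real.pi := Real.pi_gt_d6
  have hpi2 : Real.pi < 3.1415927 := lt_trans Real.pi_lt_d20 (by norm_num)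
  -- term 1 : lob (theta 5)
  have hT1 : (0.664686:ℝ) - 0.668868*(64*(200911379/200000000-1))
      + 0.664686^3/18 - 0.668868^5/600 ≤ lob (theta 5) :=
    term_lower_big (a := 0.664686) (b := 0.668868) ha5 hb5 (by norm_num) (by norm_num)
      (log_num_ub (x := 2*0.668868) (y := 200911379/200000000) (by norm_num) (by norm_num) (by norm_num)) (by norm_num)
  -- term 2 : lob (theta 5 + π/5)
  have hT2 : (1.2930044:ℝ) - 1.29718654*(64*(203001503/200000000-1))
      + 1.2930044^3/18 - 1.29718654^5/600 ≤ lob (theta 5 + Real.pi/5) :=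
    term_lower_big (a := 1.2930044) (b := 1.29718654) (by linarith) (by linarith) (by norm_num) (by norm_num)
      (log_num_ub (x := 2*1.29718654) (y := 203001503/200000000) (by norm_num) (by norm_num) (by norm_num)) (by norm_num)
  -- term 3 : lob (theta 5 - π/5)
  have hT3 : (0.03636746:ℝ) - 0.03636746*(64*(961509069/1000000000-1))
      + 0.03636746^3/18 - 0.0405496^5/600 ≤ lob (theta 5 - Real.pi/5) :=
    term_lower_small (a := 0.03636746) (b := 0.0405496) (by linarith) (by linarith) (by norm_num) (by norm_num)
      (log_num_ub (x := 2*0.0405496) (y := 961509069/1000000000) (by norm_num) (by norm_num) (by norm_num)) (by norm_num)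
  -- term 4 : lob (π/2 - 2 theta 5)
  have hT4 : (0.23306:ℝ) - 0.23306*(64*(988688651/1000000000-1))
      + 0.23306^3/18 - 0.24142435^5/600 ≤ lob (Real.pi/2 - 2*theta 5) :=
    term_lower_small (a := 0.23306) (b := 0.24142435) (by linarith) (by linarith) (by norm_num) (by norm_num)
      (log_num_ub (x := 2*0.24142435) (y := 988688651/1000000000) (by norm_num) (by norm_num) (by norm_num)) (by norm_num)
  -- term 5 : lob (theta 6)
  have hU1 : lob (theta 6) ≤ (0.61727:ℝ) - 0.61438*(64*(1-(50161201/50000000:ℝ)⁻¹))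
      + 0.61727^3/(3*(6-0.61727^2)) :=
    term_upper_big (a := 0.61438) (b := 0.61727) ha6 hb6 (by norm_num) (by norm_num)
      (log_num_lb (x := 2*0.61438) (y := 50161201/50000000) (by norm_num) (by norm_num)) (by norm_num)
  -- term 6 : lob (theta 6 + π/6)
  have hU2 : lob (theta 6 + Real.pi/6) ≤ (1.1412025:ℝ)
      - 1.1379786*(64*(1-(40517317/40000000:ℝ)⁻¹))
      + 1.1412025^3/(3*(6-1.1412025^2)) :=
    term_upper_big (a := 1.1379786) (b := 1.1412025) (by linarith) (by linarith) (by norm_num) (by norm_num)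
      (log_num_lb (x := 2*1.1379786) (y := 40517317/40000000) (by norm_num) (by norm_num)) (by norm_num)
  -- term 7 : lob (theta 6 - π/6)
  have hU3 : lob (theta 6 - Real.pi/6) ≤ (0.0936714:ℝ)
      - 0.0936714*(64*(1-(486846759/500000000:ℝ)⁻¹))
      + 0.0936714^3/(3*(6-0.0936714^2)) :=
    term_upper_small (a := 0.0907812) (b := 0.0936714) (by linarith) (by linarith) (by norm_num) (by norm_num)
      (log_num_lb (x := 2*0.0907812) (y := 486846759/500000000) (by norm_num) (by norm_num)) (by norm_num)
  -- term 8 : lob (π/2 - 2 theta 6)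
  have hU4 : lob (Real.pi/2 - 2*theta 6) ≤ (0.3420364:ℝ)
      - 0.3420364*(64*(1-(496910091/500000000:ℝ)⁻¹))
      + 0.3420364^3/(3*(6-0.3420364^2)) :=
    term_upper_small (a := 0.336256) (b := 0.3420364) (by linarith) (by linarith) (by norm_num) (by norm_num)
      (log_num_lb (x := 2*0.336256) (y := 496910091/500000000) (by norm_num) (by norm_num)) (by norm_num)
  have hneg5 : lob (2*theta 5 - Real.pi/2) = - lob (Real.pi/2 - 2*theta 5) := by
    rw [show (2*theta 5 - Real.pi/2) = -(Real.pi/2 - 2*theta 5) from by ring, lob_neg]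
  have hneg6 : lob (2*theta 6 - Real.pi/2) = - lob (Real.pi/2 - 2*theta 6) := by
    rw [show (2*theta 6 - Real.pi/2) = -(Real.pi/2 - 2*theta 6) from by ring, lob_neg]
  unfold lobV lobG
  rw [hneg5, hneg6]
  linarith [hT1, hT2, hT3, hT4, hU1, hU2, hU3, hU4]
end
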